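/- For every N ≥ 2 and G ∈ [0,1), the vector p^{(N,G)} defined recursively by p_1^{(1,G)}=1, p_N^{(N-1,G)}=0 and p_k^{(N,G)} = a_N(G) + b_N(G)·p_k^{(N-1,G)} with a_N(G) = (1-G)/((G(N-2)+1)·N) and b_N(G) = G(N-1)/(G(N-2)+1), is an ordered probability N-vector: its entries sum to 1 and satisfy 1 ≥ p_1^{(N,G)} ≥ p_2^{(N,G)} ≥ … ≥ p_N^{(N,G)} ≥ 0. -/
import Mathlib


open Finset Real Filter

/-- Coefficient a_N(G) of the Gini-stable process. -/
noncomputable def giniA (G : ℝ) (N : ℕ) : ℝ :=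
  (1 - G) / ((N : ℝ) * (G * ((N : ℝ) - 2) + 1))

/-- Coefficient b_N(G) of the Gini-stable process. -/
noncomputable def giniB (G : ℝ) (N : ℕ) : ℝ :=
  G * ((N : ℝ) - 1) / (G * ((N : ℝ) - 2) + 1)

/-- Entries p_k^{(N,G)} of the Gini-stable process (1-indexed in k). -/
noncomputable def giniP (G : ℝ) : ℕ → ℕ → ℝ
  | 0, _ => 0
  | 1, k => if k = 1 then 1 else 0
  | N + 2, k =>
      giniA G (N + 2) + giniB G (N + 2) * (if k ≤ N + 1 then giniP G (N + 1) k else 0)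

/-- Harmonic number H_m = ∑_{i=1}^m 1/i, with H 0 = 0. -/
noncomputable def H (m : ℕ) : ℝ := ∑ i ∈ Finset.range m, (1 : ℝ) / (i + 1)

lemma giniD_pos {G : ℝ} (hG0 : 0 ≤ G) {N : ℕ} (hN : 2 ≤ N) :
    0 < G * ((N : ℝ) - 2) + 1 := by
  have h2 : (2 : ℝ) ≤ (N : ℝ) := by exact_mod_cast hN
  nlinarith

lemma giniA_nonneg {G : ℝ} (hG0 : 0 ≤ G) (hG1 : G < 1) {N : ℕ} (hN : 2 ≤ N) :
    0 ≤ giniA G N := by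
  have h2 : (2 : ℝ) ≤ (N : ℝ) := by exact_mod_cast hN
  have hD := giniD_pos hG0 hN
  exact div_nonneg (by linarith) (by nlinarith)

lemma giniB_nonneg {G : ℝ} (hG0 : 0 ≤ G) {N : ℕ} (hN : 2 ≤ N) :
    0 ≤ giniB G N := by
  have h2 : (2 : ℝ) ≤ (N : ℝ) := by exact_mod_cast hN
  have hD := giniD_pos hG0 hN
  exact div_nonneg (by nlinarith) (by linarith)

lemma gini_key {G : ℝ} (hG0 : 0 ≤ G) {N : ℕ} (hN : 2 ≤ N) :
    (N : ℝ) * giniA G N + giniB G N = 1 := by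
  have h2 : (2 : ℝ) ≤ (N : ℝ) := by exact_mod_cast hN
  have hD := giniD_pos hG0 hN
  rw [giniA, giniB]
  field_simp
  ring

lemma gini_ab_le_one {G : ℝ} (hG0 : 0 ≤ G) (hG1 : G < 1) {N : ℕ} (hN : 2 ≤ N) :
    giniA G N + giniB G N ≤ 1 := by
  have h2 : (2 : ℝ) ≤ (N : ℝ) := by exact_mod_cast hN
  have hD := giniD_pos hG0 hN
  have hN0 : (0:ℝ) < (N:ℝ) := by linarith
  have hND : (0:ℝ) < (N:ℝ) * (G * ((N:ℝ) - 2) + 1) := mul_pos hN0 hD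
  rw [giniA, giniB, div_add_div _ _ (by positivity) (by linarith),
    div_le_one (by positivity)]
  nlinarith [mul_nonneg (le_of_lt hD)
    (mul_nonneg (show (0:ℝ) ≤ (N:ℝ) - 1 by linarith) (show (0:ℝ) ≤ 1 - G by linarith))]

theorem stmt0 (G : ℝ) (hG0 : 0 ≤ G) (hG1 : G < 1) (N : ℕ) (hN : 2 ≤ N) :
    (∑ k ∈ Finset.Icc 1 N, giniP G N k = 1) ∧
    giniP G N 1 ≤ 1 ∧
    (∀ k, 1 ≤ k → k < N → giniP G N (k + 1) ≤ giniP G N k) ∧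
    0 ≤ giniP G N N := by
  obtain ⟨n, rfl⟩ : ∃ n, N = n + 2 := ⟨N - 2, by omega⟩
  clear hN
  induction n with
  | zero =>
    have ha : giniA G 2 = (1 - G) / 2 := by norm_num [giniA]
    have hb : giniB G 2 = G := by norm_num [giniB]
    have h1 : giniP G 2 1 = (1 - G) / 2 + G := by simp [giniP, ha, hb]
    have h2 : giniP G 2 2 = (1 - G) / 2 := by norm_num [giniP, ha, hb]
    refine ⟨?_, ?_, ?_, ?_⟩
    · have : Finset.Icc 1 2 = {1, 2} := rfl
      rw [this]
      norm_num [h1, h2]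
      ring
    · rw [h1]; linarith
    · intro k hk1 hk2
      have : k = 1 := by omega
      subst this
      rw [h1, h2]; linarith
    · rw [h2]; linarith
  | succ n ih =>
    obtain ⟨ihsum, ihtop, ihmono, ihlast⟩ := ih
    have hN2 : 2 ≤ n + 2 := by omega
    have hN3 : 2 ≤ n + 3 := by omega
    have hA := giniA_nonneg hG0 hG1 hN3
    have hB := giniB_nonneg hG0 hN3
    have hstep : ∀ k, giniP G (n + 3) k =
        giniA G (n + 3) + giniB G (n + 3) * (if k ≤ n + 2 then giniP G (n + 2) k else 0) :=
      fun k => rfl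
    refine ⟨?_, ?_, ?_, ?_⟩
    · have h1 : ∑ k ∈ Finset.Icc 1 (n + 3), (if k ≤ n + 2 then giniP G (n + 2) k else 0)
          = ∑ k ∈ Finset.Icc 1 (n + 2), giniP G (n + 2) k := by
        rw [← Finset.sum_subset (Finset.Icc_subset_Icc_right (by omega : n + 2 ≤ n + 3))
          (fun x hx hx2 => by
            simp only [Finset.mem_Icc] at hx hx2
            rw [if_neg (by omega)])]
        exact Finset.sum_congr rfl fun x hx => by
          simp only [Finset.mem_Icc] at hx
          rw [if_pos (by omega)]
      calc ∑ k ∈ Finset.Icc 1 (n + 3), giniP G (n + 3) k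
          = ∑ k ∈ Finset.Icc 1 (n + 3),
              (giniA G (n + 3) + giniB G (n + 3) * (if k ≤ n + 2 then giniP G (n + 2) k else 0)) :=
            Finset.sum_congr rfl fun k _ => hstep k
        _ = (n + 3 : ℝ) * giniA G (n + 3) + giniB G (n + 3) *
              ∑ k ∈ Finset.Icc 1 (n + 3), (if k ≤ n + 2 then giniP G (n + 2) k else 0) := by
            rw [Finset.sum_add_distrib, Finset.sum_const, ← Finset.mul_sum, Nat.card_Icc]
            push_cast
            ring
        _ = 1 := by
            rw [h1, ihsum, mul_one]
            have := gini_key hG0 hN3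
            push_cast at this ⊢
            linarith
    · rw [hstep 1, if_pos (by omega)]
      have hab := gini_ab_le_one hG0 hG1 hN3
      nlinarith
    · intro k hk1 hk2
      rw [hstep k, hstep (k + 1), if_pos (by omega : k ≤ n + 2)]
      by_cases hk : k + 1 ≤ n + 2
      · rw [if_pos hk]
        have := ihmono k hk1 (by omega)
        nlinarith
      · rw [if_neg hk]
        have hk' : k = n + 2 := by omega
        subst hk'
        nlinarith
    · rw [hstep (n + 3), if_neg (by omega)]
      simpa using hA
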